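/- Let b ≥ 1 and let (SS_r)_{r≥0} be nonnegative integers, each less than 2^{2b}, with SS_0 ≥ 2^{b-1}. Define Y = Σ_{r≥0} SS_r · 2^{−r+1−b}, H_r = ⌊SS_r/2^b⌋, and E = Σ_{r=0}^{b} ⌊H_r · 2^{−r+1}⌋. Then E ≤ Y < E + b + 7 and Y ≥ 1. -/
import Mathlib

open scoped BigOperators

/-- quality of the coarse estimator.  With nonnegative integers
`SS_r < 2^{2b}`, `SS_0 ≥ 2^{b-1}`, `Y = Σ_{r≥0} SS_r·2^{-r+1-b}`,
`H_r = ⌊SS_r/2^b⌋` and `E = Σ_{r=0}^{b} ⌊H_r·2^{-r+1}⌋`, one has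
`E ≤ Y < E + b + 7` and `Y ≥ 1`. -/
theorem stmt11 (b : ℕ) (hb : 1 ≤ b) (SS : ℕ → ℕ)
    (hSS : ∀ r, SS r < 2 ^ (2 * b)) (h0 : 2 ^ (b - 1) ≤ SS 0)
    (Y : ℝ) (hY : Y = ∑' r : ℕ, (SS r : ℝ) * (2 : ℝ) ^ (1 - (r : ℤ) - (b : ℤ)))
    (E : ℤ)
    (hE : E = ∑ r ∈ Finset.range (b + 1),
        ⌊((SS r / 2 ^ b : ℕ) : ℝ) * (2 : ℝ) ^ (1 - (r : ℤ))⌋) :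
    (E : ℝ) ≤ Y ∧ Y < (E : ℝ) + b + 7 ∧ 1 ≤ Y := by
  have h2 : (2:ℝ) ≠ 0 := two_ne_zero
  set f : ℕ → ℝ := fun r => (SS r : ℝ) * (2:ℝ)^(1 - (r:ℤ) - (b:ℤ)) with hf
  have hinv : ∀ r : ℕ, ((2:ℝ)⁻¹)^r = (2:ℝ)^(-(r:ℤ)) := by
    intro r; rw [zpow_neg, zpow_natCast, inv_pow]
  have hzp : ∀ r : ℕ, (2:ℝ)^(1-(r:ℤ)-(b:ℤ)) = (2:ℝ)^(1-(b:ℤ)) * (2⁻¹)^r := by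
    intro r
    rw [hinv, ← zpow_add₀ h2]
    congr 1; ring
  have hfnn : ∀ r, 0 ≤ f r := fun r =>
    mul_nonneg (Nat.cast_nonneg _) (zpow_nonneg (by norm_num) _)
  have hgeo : Summable (fun r : ℕ => ((2:ℝ)⁻¹)^r) :=
    summable_geometric_of_lt_one (by norm_num) (by norm_num)
  have hle : ∀ r : ℕ, f r ≤ ((2:ℝ)^(2*b) * (2:ℝ)^(1-(b:ℤ))) * ((2:ℝ)⁻¹)^r := by
    intro r
    rw [hf]
    simp only
    rw [hzp, ← mul_assoc]
    apply mul_le_mul_of_nonneg_right _ (by positivity)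
    apply mul_le_mul_of_nonneg_right _ (by positivity)
    exact_mod_cast (hSS r).le
  have hsum : Summable f := Summable.of_nonneg_of_le hfnn hle (hgeo.mul_left _)
  have hpow : ∀ r : ℕ, (2:ℝ)^(1-(r:ℤ)) = (2:ℝ)^(b:ℤ) * (2:ℝ)^(1-(r:ℤ)-(b:ℤ)) := by
    intro r; rw [← zpow_add₀ h2]; ring_nf
  -- lower per-term bound
  have hlow : ∀ r : ℕ, (⌊((SS r / 2 ^ b : ℕ) : ℝ) * (2 : ℝ) ^ (1 - (r : ℤ))⌋ : ℝ) ≤ f r := by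
    intro r
    refine (Int.floor_le _).trans ?_
    rw [hpow, ← mul_assoc, hf]
    apply mul_le_mul_of_nonneg_right _ (zpow_nonneg (by norm_num) _)
    rw [zpow_natCast]
    have := Nat.div_mul_le_self (SS r) (2^b)
    exact_mod_cast this
  -- upper per-term bound
  have hup : ∀ r : ℕ, f r < (⌊((SS r / 2 ^ b : ℕ) : ℝ) * (2 : ℝ) ^ (1 - (r : ℤ))⌋ : ℝ)
      + 1 + (2:ℝ)^(1-(r:ℤ)) := by
    intro r
    have hdm : (SS r : ℝ) = (2:ℝ)^(b:ℤ) * ((SS r / 2^b : ℕ) : ℝ) + ((SS r % 2^b : ℕ) : ℝ) := by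
      rw [zpow_natCast]
      exact_mod_cast (Nat.div_add_mod (SS r) (2^b)).symm
    have hsplit : f r = ((SS r / 2 ^ b : ℕ) : ℝ) * (2:ℝ)^(1-(r:ℤ))
        + ((SS r % 2^b : ℕ) : ℝ) * (2:ℝ)^(1-(r:ℤ)-(b:ℤ)) := by
      rw [hf]; simp only
      rw [hdm, hpow]; ring
    rw [hsplit]
    have h1 : ((SS r / 2 ^ b : ℕ) : ℝ) * (2:ℝ)^(1-(r:ℤ))
        < (⌊((SS r / 2 ^ b : ℕ) : ℝ) * (2 : ℝ) ^ (1 - (r : ℤ))⌋ : ℝ) + 1 :=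
      Int.lt_floor_add_one _
    have h2' : ((SS r % 2^b : ℕ) : ℝ) * (2:ℝ)^(1-(r:ℤ)-(b:ℤ)) ≤ (2:ℝ)^(1-(r:ℤ)) := by
      rw [hpow]
      apply mul_le_mul_of_nonneg_right _ (zpow_nonneg (by norm_num) _)
      rw [zpow_natCast]
      exact_mod_cast (Nat.mod_lt _ (by positivity)).le
    linarith
  -- Y split
  have hsplitY : Y = ∑ r ∈ Finset.range (b+1), f r + ∑' k : ℕ, f (k + (b+1)) := by
    rw [hY, ← Summable.sum_add_tsum_nat_add (b+1) hsum]
  have htailnn : 0 ≤ ∑' k : ℕ, f (k + (b+1)) :=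
    tsum_nonneg (fun k => hfnn _)
  have htail : ∑' k : ℕ, f (k + (b+1)) ≤ 2 := by
    have hb1 : ∀ k : ℕ, f (k + (b+1)) ≤ ((2:ℝ)⁻¹)^k := by
      intro k
      rw [hf]; simp only
      have : (1 - ((k + (b+1) : ℕ) : ℤ) - (b:ℤ)) = (-(k:ℤ)) + (-(2*b:ℤ)) := by
        push_cast; ring
      rw [this, zpow_add₀ h2]
      calc (SS (k+(b+1)) : ℝ) * ((2:ℝ)^(-(k:ℤ)) * (2:ℝ)^(-(2*b:ℤ)))
          ≤ (2:ℝ)^(2*b) * ((2:ℝ)^(-(k:ℤ)) * (2:ℝ)^(-(2*b:ℤ))) := by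
            apply mul_le_mul_of_nonneg_right _ (by positivity)
            exact_mod_cast (hSS _).le
        _ = (2:ℝ)^(-(k:ℤ)) := by
            rw [← zpow_natCast (2:ℝ) (2*b), ← zpow_add₀ h2, ← zpow_add₀ h2]
            push_cast; ring_nf
        _ = ((2:ℝ)⁻¹)^k := (hinv k).symm
    calc ∑' k : ℕ, f (k + (b+1)) ≤ ∑' k : ℕ, ((2:ℝ)⁻¹)^k :=
          Summable.tsum_le_tsum hb1 (hsum.comp_injective (add_left_injective _)) hgeo
      _ = 2 := by rw [tsum_geometric_inv_two]
  -- E ≤ Y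
  have hEleY : (E:ℝ) ≤ Y := by
    rw [hsplitY, hE]
    push_cast
    have : (∑ r ∈ Finset.range (b+1),
        (⌊((SS r / 2 ^ b : ℕ) : ℝ) * (2 : ℝ) ^ (1 - (r : ℤ))⌋ : ℝ))
        ≤ ∑ r ∈ Finset.range (b+1), f r :=
      Finset.sum_le_sum (fun r _ => hlow r)
    linarith
  refine ⟨hEleY, ?_, ?_⟩
  · -- Y < E + b + 7
    have hhead : ∑ r ∈ Finset.range (b+1), f r
        < ∑ r ∈ Finset.range (b+1),
            ((⌊((SS r / 2 ^ b : ℕ) : ℝ) * (2 : ℝ) ^ (1 - (r : ℤ))⌋ : ℝ)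
              + 1 + (2:ℝ)^(1-(r:ℤ))) :=
      Finset.sum_lt_sum_of_nonempty (Finset.nonempty_range_iff.mpr (Nat.succ_ne_zero b))
        (fun r _ => hup r)
    have hgeomsum : ∑ r ∈ Finset.range (b+1), (2:ℝ)^(1-(r:ℤ)) ≤ 4 := by
      have h1 : ∀ r : ℕ, (2:ℝ)^(1-(r:ℤ)) = 2 * ((2:ℝ)⁻¹)^r := by
        intro r
        rw [hinv, sub_eq_add_neg, zpow_add₀ h2, zpow_one]
      calc ∑ r ∈ Finset.range (b+1), (2:ℝ)^(1-(r:ℤ))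
          = 2 * ∑ r ∈ Finset.range (b+1), ((2:ℝ)⁻¹)^r := by
            rw [Finset.mul_sum]; exact Finset.sum_congr rfl (fun r _ => h1 r)
        _ ≤ 2 * 2 := by
            have := Summable.sum_le_tsum (Finset.range (b+1))
              (fun i _ => by positivity) hgeo
            rw [tsum_geometric_inv_two] at this
            linarith
        _ = 4 := by norm_num
    have hsums : ∑ r ∈ Finset.range (b+1),
        ((⌊((SS r / 2 ^ b : ℕ) : ℝ) * (2 : ℝ) ^ (1 - (r : ℤ))⌋ : ℝ)
          + 1 + (2:ℝ)^(1-(r:ℤ)))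
        = (E:ℝ) + (b+1) + ∑ r ∈ Finset.range (b+1), (2:ℝ)^(1-(r:ℤ)) := by
      rw [Finset.sum_add_distrib, Finset.sum_add_distrib, hE]
      push_cast
      simp [Finset.sum_const, Finset.card_range]
    rw [hsplitY]
    rw [hsums] at hhead
    linarith
  · -- 1 ≤ Y
    have h1 : (1:ℝ) ≤ f 0 := by
      rw [hf]; simp only
      have : (1:ℝ) = (2:ℝ)^((b:ℤ)-1) * (2:ℝ)^(1-(0:ℕ)-(b:ℤ)) := by
        rw [← zpow_add₀ h2]; norm_num
      calc (1:ℝ) = (2:ℝ)^((b:ℤ)-1) * (2:ℝ)^(1-((0:ℕ):ℤ)-(b:ℤ)) := by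
            rw [← zpow_add₀ h2]; norm_num
        _ ≤ (SS 0 : ℝ) * (2:ℝ)^(1-((0:ℕ):ℤ)-(b:ℤ)) := by
            apply mul_le_mul_of_nonneg_right _ (zpow_nonneg (by norm_num) _)
            have hcast : (2:ℝ)^((b:ℤ)-1) = ((2^(b-1) : ℕ) : ℝ) := by
              push_cast
              rw [← zpow_natCast (2:ℝ) (b-1)]
              congr 1
              omega
            rw [hcast]
            exact_mod_cast h0
    have := Summable.le_tsum hsum 0 (fun i _ => hfnn i)
    rw [← hY] at this
    linarith
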